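/- Let G be a finite abelian group whose order is a positive power of a prime number p. Then the resolving sets of the power graph P_G have the exchange property. -/

import Mathlib

open SimpleGraph
open Subgroup

/-- `W` is a resolving set for the graph `Γ`: any two distinct vertices are
distinguished by their distance to some element of `W`. -/
def IsResolvingSet {V : Type*} (Γ : SimpleGraph V) (W : Set V) : Prop :=
  ∀ u v : V, u ≠ v → ∃ w ∈ W, Γ.dist u w ≠ Γ.dist v w

/-- The metric dimension of a graph: the least cardinality of a resolving set. -/
noncomputable def metricDim {V : Type*} (Γ : SimpleGraph V) : ℕ :=
  sInf {n | ∃ W : Set V, W.Finite ∧ W.ncard = n ∧ IsResolvingSet Γ W}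

/-- A minimal resolving set: a resolving set no proper subset of which resolves. -/
def IsMinimalResolvingSet {V : Type*} (Γ : SimpleGraph V) (W : Set V) : Prop :=
  IsResolvingSet Γ W ∧ ∀ W' : Set V, W' ⊂ W → ¬ IsResolvingSet Γ W'

/-- Two vertices are twins if they have the same open neighborhood or the same
closed neighborhood. -/
def AreTwins {V : Type*} (Γ : SimpleGraph V) (u v : V) : Prop :=
  Γ.neighborSet u = Γ.neighborSet v ∨
    insert u (Γ.neighborSet u) = insert v (Γ.neighborSet v)

/-- The twin class of a vertex. -/
def twinClass {V : Type*} (Γ : SimpleGraph V) (u : V) : Set V :=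
  {v | AreTwins Γ u v}

/-- The number of twin classes of a graph. -/
noncomputable def twinClassCount {V : Type*} (Γ : SimpleGraph V) : ℕ :=
  {S : Set V | ∃ u : V, S = twinClass Γ u}.ncard

/-- Resolving sets of `Γ` have the exchange property. -/
def HasExchangeProperty {V : Type*} (Γ : SimpleGraph V) : Prop :=
  ∀ W₁ W₂ : Set V, IsMinimalResolvingSet Γ W₁ → IsMinimalResolvingSet Γ W₂ →
    ∀ u ∈ W₁, ∃ v ∈ W₂, IsMinimalResolvingSet Γ ((W₁ \ {u}) ∪ {v})

/-- The (undirected) power graph of a group `G`: distinct `x`, `y` are adjacent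
iff one is a positive power of the other. -/
def powerGraph (G : Type*) [Group G] : SimpleGraph G :=
  SimpleGraph.fromRel (fun x y => ∃ m : ℕ, 0 < m ∧ y = x ^ m)

/-- `R{x,y}`: the set of vertices having different distances to `x` and `y`. -/
def Rset {V : Type*} (Γ : SimpleGraph V) (x y : V) : Set V :=
  {z | Γ.dist x z ≠ Γ.dist y z}

section GraphGeneral
variable {V : Type*} {Γ : SimpleGraph V}

lemma twins_refl (u : V) : AreTwins Γ u u := Or.inl rfl

lemma twins_symm {u v : V} (h : AreTwins Γ u v) : AreTwins Γ v u := by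
  rcases h with h | h
  · exact Or.inl h.symm
  · exact Or.inr h.symm

lemma twins_adj_iff {w w' a : V} (h : AreTwins Γ w w') (haw : a ≠ w) (haw' : a ≠ w') :
    (Γ.Adj w a ↔ Γ.Adj w' a) := by
  rcases h with h | h
  · constructor
    · intro hh
      have : a ∈ Γ.neighborSet w' := h ▸ hh
      exact this
    · intro hh
      have : a ∈ Γ.neighborSet w := h ▸ hh
      exact this
  · have := Set.ext_iff.mp h a
    simp only [Set.mem_insert_iff, mem_neighborSet] at this
    constructor
    · intro hh
      rcases this.mp (Or.inr hh) with h1 | h1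
      · exact absurd h1 haw'
      · exact h1
    · intro hh
      rcases this.mpr (Or.inr hh) with h1 | h1
      · exact absurd h1 haw
      · exact h1

lemma twins_trans {u v w : V} (h1 : AreTwins Γ u v) (h2 : AreTwins Γ v w) : AreTwins Γ u w := by
  by_cases huv : u = v
  · exact huv ▸ h2
  by_cases hvw : v = w
  · exact hvw ▸ h1
  rcases h1 with h1 | h1 <;> rcases h2 with h2 | h2
  · exact Or.inl (h1.trans h2)
  · -- open u v, closed v w : impossible
    exfalso
    have hv : (v : V) ∈ insert w (Γ.neighborSet w) := h2 ▸ Set.mem_insert v _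
    rcases hv with hv | hv
    · exact hvw hv
    · have hwv : Γ.Adj v w := (hv : Γ.Adj w v).symm
      have : w ∈ Γ.neighborSet u := h1 ▸ (hwv : w ∈ Γ.neighborSet v)
      have hu : (u : V) ∈ insert v (Γ.neighborSet v) := h2.symm ▸
        (Set.mem_insert_of_mem w (by exact this.symm : u ∈ Γ.neighborSet w))
      rcases hu with hu | hu
      · exact huv hu
      · have : u ∈ Γ.neighborSet u := h1 ▸ hu
        exact Γ.irrefl this
  · -- closed u v, open v w : impossible
    exfalso
    have hv : (v : V) ∈ insert u (Γ.neighborSet u) := h1 ▸ Set.mem_insert v _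
    rcases hv with hv | hv
    · exact huv hv.symm
    · have huvadj : Γ.Adj u v := hv
      have : u ∈ Γ.neighborSet w := h2 ▸ (by exact huvadj.symm : u ∈ Γ.neighborSet v)
      have hw : (w : V) ∈ insert v (Γ.neighborSet v) := h1.symm ▸
        (Set.mem_insert_of_mem u (by exact this.symm : w ∈ Γ.neighborSet u))
      rcases hw with hw | hw
      · exact hvw hw.symm
      · have : w ∈ Γ.neighborSet w := h2 ▸ hw
        exact Γ.irrefl this
  · exact Or.inr (h1.trans h2)

lemma exists_adj_diff_of_not_twins {u v : V} (huv : u ≠ v) (hnt : ¬ AreTwins Γ u v) :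
    ∃ w, w ≠ u ∧ w ≠ v ∧ ¬ (Γ.Adj u w ↔ Γ.Adj v w) := by
  rw [AreTwins, not_or] at hnt
  obtain ⟨h1, h2⟩ := hnt
  by_cases hadj : Γ.Adj u v
  · obtain ⟨a, ha⟩ : ∃ a, ¬ (a ∈ insert u (Γ.neighborSet u) ↔ a ∈ insert v (Γ.neighborSet v)) := by
      by_contra hc
      push_neg at hc
      exact h2 (Set.ext fun a => hc a)
    simp only [Set.mem_insert_iff, mem_neighborSet] at ha
    have hau : a ≠ u := by
      rintro rfl
      exact ha (by simp [hadj.symm])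
    have hav : a ≠ v := by
      rintro rfl
      exact ha (by simp [hadj])
    refine ⟨a, hau, hav, fun hc => ha ?_⟩
    constructor
    · rintro (rfl | h)
      · exact absurd rfl hau
      · exact Or.inr (hc.mp h)
    · rintro (rfl | h)
      · exact absurd rfl hav
      · exact Or.inr (hc.mpr h)
  · obtain ⟨a, ha⟩ : ∃ a, ¬ (a ∈ Γ.neighborSet u ↔ a ∈ Γ.neighborSet v) := by
      by_contra hc
      push_neg at hc
      exact h1 (Set.ext fun a => hc a)
    simp only [mem_neighborSet] at ha
    have hau : a ≠ u := by
      rintro rfl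
      simp only [Γ.irrefl, false_iff] at ha
      exact ha fun h => hadj h.symm
    have hav : a ≠ v := by
      rintro rfl
      simp only [Γ.irrefl, iff_false] at ha
      exact ha fun h => hadj h
    exact ⟨a, hau, hav, ha⟩

end GraphGeneral

section PG
variable {G : Type*} [Group G] [Fintype G]

lemma pg_adj {x y : G} :
    (powerGraph G).Adj x y ↔ x ≠ y ∧ (y ∈ zpowers x ∨ x ∈ zpowers y) := by
  rw [powerGraph, SimpleGraph.fromRel_adj]
  have key : ∀ a b : G, (∃ m : ℕ, 0 < m ∧ b = a ^ m) ↔ b ∈ zpowers a := by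
    intro a b
    constructor
    · rintro ⟨m, -, rfl⟩
      exact ⟨(m : ℤ), by simp⟩
    · intro hb
      obtain ⟨n, hn⟩ := (isOfFinOrder_of_finite a).mem_powers_iff_mem_zpowers.mpr hb
      rcases Nat.eq_zero_or_pos n with rfl | hnpos
      · exact ⟨orderOf a, orderOf_pos a, by simp at hn; rw [← hn, pow_orderOf_eq_one]⟩
      · exact ⟨n, hnpos, hn.symm⟩
  rw [key, key]

lemma pg_adj_one {x : G} (hx : x ≠ 1) : (powerGraph G).Adj x 1 :=
  pg_adj.mpr ⟨hx, Or.inl (one_mem _)⟩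

lemma pg_dist_two {x y : G} (hxy : x ≠ y) (hadj : ¬ (powerGraph G).Adj x y) :
    (powerGraph G).dist x y = 2 := by
  have hx1 : x ≠ 1 := by
    rintro rfl
    exact hadj (pg_adj_one (Ne.symm hxy)).symm
  have hy1 : y ≠ 1 := by
    rintro rfl
    exact hadj (pg_adj_one hxy)
  have h2 := SimpleGraph.dist_le (Walk.cons (pg_adj_one hx1) (Walk.cons (pg_adj_one hy1).symm Walk.nil))
  simp only [SimpleGraph.Walk.length_cons, SimpleGraph.Walk.length_nil] at h2
  have h0 : (powerGraph G).dist x y ≠ 0 := by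
    intro hc
    rcases SimpleGraph.dist_eq_zero_iff_eq_or_not_reachable.mp hc with h | h
    · exact hxy h
    · exact h ⟨Walk.cons (pg_adj_one hx1) (Walk.cons (pg_adj_one hy1).symm Walk.nil)⟩
  have h1 : (powerGraph G).dist x y ≠ 1 := fun hc =>
    hadj (SimpleGraph.dist_eq_one_iff_adj.mp hc)
  omega

lemma pg_dist_ne_zero {x y : G} (hxy : x ≠ y) : (powerGraph G).dist x y ≠ 0 := by
  by_cases h : (powerGraph G).Adj x y
  · rw [SimpleGraph.dist_eq_one_iff_adj.mpr h]; omega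
  · rw [pg_dist_two hxy h]; omega

lemma pg_resolver {u v w : G} (huv : u ≠ v) :
    (powerGraph G).dist u w ≠ (powerGraph G).dist v w ↔
      (w = u ∨ w = v ∨ ¬ ((powerGraph G).Adj u w ↔ (powerGraph G).Adj v w)) := by
  by_cases hwu : w = u
  · subst hwu
    refine iff_of_true ?_ (Or.inl rfl)
    rw [SimpleGraph.dist_self]
    exact fun h => pg_dist_ne_zero (Ne.symm huv) h.symm
  · by_cases hwv : w = v
    · subst hwv
      refine iff_of_true ?_ (Or.inr (Or.inl rfl))
      rw [SimpleGraph.dist_self]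
      exact pg_dist_ne_zero huv ∘ Eq.symm ∘ Eq.symm
    · have huw : u ≠ w := fun h => hwu h.symm
      have hvw : v ≠ w := fun h => hwv h.symm
      by_cases h1 : (powerGraph G).Adj u w <;> by_cases h2 : (powerGraph G).Adj v w
      · rw [SimpleGraph.dist_eq_one_iff_adj.mpr h1, SimpleGraph.dist_eq_one_iff_adj.mpr h2]
        simp [hwu, hwv, h1, h2]
      · rw [SimpleGraph.dist_eq_one_iff_adj.mpr h1, pg_dist_two hvw h2]
        simp [hwu, hwv, h1, h2]
      · rw [pg_dist_two huw h1, SimpleGraph.dist_eq_one_iff_adj.mpr h2]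
        simp [hwu, hwv, h1, h2]
      · rw [pg_dist_two huw h1, pg_dist_two hvw h2]
        simp [hwu, hwv, h1, h2]

lemma mem_zpowers_of_sq {g x : G} (hg : g ^ 2 = 1) (hx : x ∈ zpowers g) :
    x = 1 ∨ x = g := by
  obtain ⟨n, hn⟩ := (isOfFinOrder_of_finite g).mem_powers_iff_mem_zpowers.mpr hx
  simp only [] at hn
  rw [← hn, pow_eq_pow_mod n hg]
  have hlt : n % 2 = 0 ∨ n % 2 = 1 := by omega
  rcases hlt with h | h <;> rw [h] <;> simp

end PG

section PG2
variable {G : Type*} [Group G] [Fintype G]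

lemma pg_twins_inv (g : G) : AreTwins (powerGraph G) g g⁻¹ := by
  refine Or.inr (Set.ext fun a => ?_)
  simp only [Set.mem_insert_iff, mem_neighborSet, pg_adj]
  have hiff : ∀ b : G, (b = g ∨ b = g⁻¹) →
      ((a = b ∨ (b ≠ a ∧ (a ∈ zpowers b ∨ b ∈ zpowers a))) ↔
        (a ∈ zpowers g ∨ g ∈ zpowers a)) := by
    intro b hb
    have e1 : a ∈ zpowers b ↔ a ∈ zpowers g := by
      rcases hb with rfl | rfl
      · exact Iff.rfl
      · rw [Subgroup.zpowers_inv]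
    have e2 : b ∈ zpowers a ↔ g ∈ zpowers a := by
      rcases hb with rfl | rfl
      · exact Iff.rfl
      · exact inv_mem_iff
    constructor
    · rintro (rfl | ⟨-, h⟩)
      · rcases hb with rfl | rfl
        · exact Or.inl (mem_zpowers a)
        · exact Or.inl (by simpa using inv_mem (mem_zpowers g))
      · rcases h with h | h
        · exact Or.inl (e1.mp h)
        · exact Or.inr (e2.mp h)
    · intro h
      by_cases hab : a = b
      · exact Or.inl hab
      · refine Or.inr ⟨fun hh => hab hh.symm, ?_⟩
        rcases h with h | h
        · exact Or.inl (e1.mpr h)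
        · exact Or.inr (e2.mpr h)
  rw [hiff g (Or.inl rfl), hiff g⁻¹ (Or.inr rfl)]

lemma isCyclic_zpowers (g : G) : IsCyclic ↥(zpowers g) := by
  constructor
  refine ⟨⟨g, mem_zpowers g⟩, ?_⟩
  rintro ⟨x, hx⟩
  obtain ⟨k, hk⟩ := mem_zpowers_iff.mp hx
  exact ⟨k, Subtype.ext (by simpa using hk)⟩

lemma pg_unique_invol {v x y : G} (hx : x ∈ zpowers v) (hy : y ∈ zpowers v)
    (hx2 : x ^ 2 = 1) (hy2 : y ^ 2 = 1) (hx1 : x ≠ 1) (hy1 : y ≠ 1) : x = y := by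
  classical
  by_contra hxy
  set a : ↥(zpowers v) := ⟨x, hx⟩ with ha
  set b : ↥(zpowers v) := ⟨y, hy⟩ with hb
  haveI := _root_.isCyclic_zpowers v
  have key := IsCyclic.card_pow_eq_one_le (α := ↥(zpowers v)) (n := 2) (by norm_num)
  have hsub : ({a, b, 1} : Finset ↥(zpowers v)) ⊆
      Finset.univ.filter (fun t => t ^ 2 = 1) := by
    intro t ht
    simp only [Finset.mem_insert, Finset.mem_singleton] at ht
    simp only [Finset.mem_filter, Finset.mem_univ, true_and]
    rcases ht with rfl | rfl | rfl
    · exact Subtype.ext (by simpa using hx2)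
    · exact Subtype.ext (by simpa using hy2)
    · exact one_pow 2
  have hab : a ≠ b := fun h => hxy (congrArg Subtype.val h)
  have ha1 : a ≠ 1 := fun h => hx1 (congrArg Subtype.val h)
  have hb1 : b ≠ 1 := fun h => hy1 (congrArg Subtype.val h)
  have hcard3 : ({a, b, 1} : Finset ↥(zpowers v)).card = 3 := by
    rw [Finset.card_insert_of_notMem (by simp [hab, ha1]),
      Finset.card_insert_of_notMem (by simp [hb1]), Finset.card_singleton]
  have := Finset.card_le_card hsub
  omega

end PG2

section Key
variable {G : Type*} [CommGroup G] [Fintype G]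

lemma p_eq_two {p m : ℕ} (hp : p.Prime) (hcard : Fintype.card G = p ^ m)
    {x : G} (hx2 : x ^ 2 = 1) (hx1 : x ≠ 1) : p = 2 := by
  haveI : Fact (Nat.Prime 2) := ⟨Nat.prime_two⟩
  have ho : orderOf x = 2 := orderOf_eq_prime hx2 hx1
  have hdvd : 2 ∣ p ^ m := by
    rw [← ho, ← hcard]; exact orderOf_dvd_card
  exact ((Nat.prime_dvd_prime_iff_eq Nat.prime_two hp).mp
    (Nat.Prime.dvd_of_dvd_pow Nat.prime_two hdvd)).symm

lemma exists_invol_in_zpowers {m : ℕ} (hcard : Fintype.card G = 2 ^ m)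
    {g : G} (hg : g ≠ 1) : ∃ y ∈ zpowers g, y ^ 2 = 1 ∧ y ≠ 1 := by
  have hdvd : orderOf g ∣ 2 ^ m := by rw [← hcard]; exact orderOf_dvd_card
  obtain ⟨k, -, hk⟩ := (Nat.dvd_prime_pow Nat.prime_two).mp hdvd
  have hk1 : 1 ≤ k := by
    rcases Nat.eq_zero_or_pos k with rfl | h
    · exfalso; apply hg; rw [← orderOf_eq_one_iff, hk, pow_zero]
    · exact h
  refine ⟨g ^ (2 ^ (k - 1)), mem_zpowers_iff.mpr ⟨(2 ^ (k - 1) : ℕ), zpow_natCast g _⟩, ?_, ?_⟩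
  · rw [← pow_mul]
    have : 2 ^ (k - 1) * 2 = 2 ^ k := by
      rw [← pow_succ]; congr 1; omega
    rw [this, ← hk, pow_orderOf_eq_one]
  · intro hc
    have hd := orderOf_dvd_iff_pow_eq_one.mpr hc
    rw [hk] at hd
    have := (Nat.pow_dvd_pow_iff_le_right (by norm_num : (1:ℕ) < 2)).mp hd
    omega

lemma pg_hord {u v : G}
    (h : ∀ w, w ≠ u → w ≠ v → ¬ ((powerGraph G).Adj u w ↔ (powerGraph G).Adj v w) →
      ∀ w', w' ≠ w → ¬ AreTwins (powerGraph G) w w') :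
    ∀ w, w ≠ u → w ≠ v → ¬ ((powerGraph G).Adj u w ↔ (powerGraph G).Adj v w) → w ^ 2 = 1 := by
  intro w h1 h2 h3
  by_contra hw2
  have hinv : w⁻¹ ≠ w := by
    intro hc
    apply hw2
    calc w ^ 2 = w * w := pow_two w
    _ = w * w⁻¹ := by rw [hc]
    _ = 1 := mul_inv_cancel w
  exact h w h1 h2 h3 w⁻¹ hinv (pg_twins_inv w)

lemma key_C1half {u v x : G} (hu1 : u ≠ 1) (hv1 : v ≠ 1) (hu2 : u ^ 2 = 1)
    (hx2 : x ^ 2 = 1) (hxu : x ≠ u)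
    (hax : (powerGraph G).Adj u x) (hnax : ¬ (powerGraph G).Adj v x) : False := by
  rcases (pg_adj.mp hax).2 with h | h
  · rcases mem_zpowers_of_sq hu2 h with rfl | h'
    · exact hnax (pg_adj_one hv1)
    · exact hxu h'
  · rcases mem_zpowers_of_sq hx2 h with h' | h'
    · exact hu1 h'
    · exact hxu h'.symm

lemma key_incomp {u v : G} (huv : u ≠ v)
    (hncmp : ¬ (u ∈ zpowers v ∨ v ∈ zpowers u))
    (hnt : ¬ AreTwins (powerGraph G) u v)
    (h : ∀ w, w ≠ u → w ≠ v → ¬ ((powerGraph G).Adj u w ↔ (powerGraph G).Adj v w) →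
      ∀ w', w' ≠ w → ¬ AreTwins (powerGraph G) w w') : False := by
  have hord := pg_hord h
  have hu1 : u ≠ 1 := by rintro rfl; exact hncmp (Or.inl (one_mem _))
  have hv1 : v ≠ 1 := by rintro rfl; exact hncmp (Or.inr (one_mem _))
  -- both u and v are involutions
  have hsq : ∀ a b : G, a ≠ b → ¬ (a ∈ zpowers b ∨ b ∈ zpowers a) →
      (∀ w, w ≠ a → w ≠ b → ¬ ((powerGraph G).Adj a w ↔ (powerGraph G).Adj b w) → w ^ 2 = 1) →
      a ^ 2 = 1 := by
    intro a b hab hncmp' hord'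
    by_contra ha2
    have hinv : a⁻¹ ≠ a := by
      intro hc
      apply ha2
      calc a ^ 2 = a * a := pow_two a
      _ = a * a⁻¹ := by rw [hc]
      _ = 1 := mul_inv_cancel a
    have h1 : a⁻¹ ≠ b := by
      intro hc
      exact hncmp' (Or.inr (by rw [← hc]; exact inv_mem (mem_zpowers a)))
    have hadj : (powerGraph G).Adj a a⁻¹ :=
      pg_adj.mpr ⟨fun hc => hinv hc.symm, Or.inl (inv_mem (mem_zpowers a))⟩
    have hnadj : ¬ (powerGraph G).Adj b a⁻¹ := by
      intro hc
      rcases (pg_adj.mp hc).2 with hh | hh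
      · exact hncmp' (Or.inl (inv_mem_iff.mp hh))
      · rw [Subgroup.zpowers_inv] at hh
        exact hncmp' (Or.inr hh)
    have := hord' a⁻¹ hinv h1 (by simp [hadj, hnadj])
    apply ha2
    rw [← inv_eq_one, ← inv_pow]
    exact this
  have hu2 : u ^ 2 = 1 := hsq u v huv hncmp hord
  have hv2 : v ^ 2 = 1 := by
    refine hsq v u (Ne.symm huv) (fun hc => hncmp hc.symm) ?_
    intro w h1 h2 h3
    exact hord w h2 h1 (fun hc => h3 hc.symm)
  -- open neighborhoods differ

  have hnopen : (powerGraph G).neighborSet u ≠ (powerGraph G).neighborSet v := by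
    intro hc
    exact hnt (Or.inl hc)
  obtain ⟨x, hx⟩ : ∃ x, ¬ (x ∈ (powerGraph G).neighborSet u ↔ x ∈ (powerGraph G).neighborSet v) := by
    by_contra hc
    push_neg at hc
    exact hnopen (Set.ext fun a => hc a)
  simp only [mem_neighborSet] at hx
  have hxu : x ≠ u := by
    rintro rfl
    apply hx
    constructor
    · intro hh; exact absurd hh (powerGraph G).irrefl
    · intro hh
      exfalso
      rcases (pg_adj.mp hh).2 with h' | h'
      · exact hncmp (Or.inl h')
      · exact hncmp (Or.inr h')
  have hxv : x ≠ v := by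
    rintro rfl
    apply hx
    constructor
    · intro hh
      exfalso
      rcases (pg_adj.mp hh).2 with h' | h'
      · exact hncmp (Or.inr h')
      · exact hncmp (Or.inl h')
    · intro hh; exact absurd hh (powerGraph G).irrefl
  have hx2 : x ^ 2 = 1 := hord x hxu hxv hx
  by_cases hux : (powerGraph G).Adj u x
  · have hnvx : ¬ (powerGraph G).Adj v x := fun hc => hx ⟨fun _ => hc, fun _ => hux⟩
    exact key_C1half hu1 hv1 hu2 hx2 hxu hux hnvx
  · have hvx : (powerGraph G).Adj v x := by
      by_contra hc
      exact hx ⟨fun hh => absurd hh hux, fun hh => absurd hh hc⟩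
    exact key_C1half hv1 hu1 hv2 hx2 hxv hvx hux

end Key

section Key2
variable {G : Type*} [CommGroup G] [Fintype G]

lemma key_comp {m : ℕ} (hcard2 : Fintype.card G = 2 ^ m) {u v x : G}
    (huv : u ≠ v) (huzv : u ∈ zpowers v)
    (hxu : x ≠ u) (hxv : x ≠ v)
    (hx2 : x ^ 2 = 1)
    (hux : (powerGraph G).Adj u x) (hnvx : ¬ (powerGraph G).Adj v x)
    (hord : ∀ w, w ≠ u → w ≠ v → ¬ ((powerGraph G).Adj u w ↔ (powerGraph G).Adj v w) → w ^ 2 = 1)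
    (h : ∀ w, w ≠ u → w ≠ v → ¬ ((powerGraph G).Adj u w ↔ (powerGraph G).Adj v w) →
      ∀ w', w' ≠ w → ¬ AreTwins (powerGraph G) w w') : False := by
  -- From Adj u x : x ∈ zpowers u or u ∈ zpowers x
  rcases (pg_adj.mp hux).2 with hxzu | huzx
  · -- x ∈ zpowers u ≤ zpowers v, so Adj v x : contradiction
    exact hnvx (pg_adj.mpr ⟨Ne.symm hxv, Or.inl ((zpowers_le.mpr huzv) hxzu)⟩)
  · -- u ∈ zpowers x, x² = 1 forces u = 1
    rcases mem_zpowers_of_sq hx2 huzx with hu1 | hux'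
    swap
    · exact hxu hux'.symm
    subst hu1
    have hv1 : v ≠ 1 := Ne.symm huv
    have hx1 : x ≠ 1 := hxu
    -- x is incomparable to v
    have hncmp : ¬ (x ∈ zpowers v ∨ v ∈ zpowers x) :=
      fun hc => hnvx (pg_adj.mpr ⟨Ne.symm hxv, hc⟩)
    by_cases hv2 : v ^ 2 = 1
    · -- B2 : v is an involution
      have c1 : ∀ y : G, y ^ 2 ≠ 1 → v ∈ zpowers y := by
        intro y hy2
        have hy1 : y ≠ 1 := fun hc => hy2 (by rw [hc, one_pow])
        have hyv : y ≠ v := fun hc => hy2 (hc ▸ hv2)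
        by_cases hadj : (powerGraph G).Adj v y
        · rcases (pg_adj.mp hadj).2 with hyzv | hvzy
          · rcases mem_zpowers_of_sq hv2 hyzv with h' | h'
            · exact absurd h' hy1
            · exact absurd h' hyv
          · exact hvzy
        · exfalso
          apply hy2
          refine hord y hy1 hyv ?_
          simp only [(pg_adj_one hy1).symm, true_iff]
          exact hadj
      have c2 : ∀ t : G, t ^ 2 = 1 → t ≠ 1 → ¬ (t ∈ zpowers v ∨ v ∈ zpowers t) →
          ∀ y, (powerGraph G).Adj t y → y = 1 := by
        intro t ht2 ht1 htn y hadj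
        rcases pg_adj.mp hadj with ⟨hty, hyzt | htzy⟩
        · rcases mem_zpowers_of_sq ht2 hyzt with h' | h'
          · exact h'
          · exact absurd h'.symm hty
        · by_cases hy2 : y ^ 2 = 1
          · rcases mem_zpowers_of_sq hy2 htzy with h' | h'
            · exact absurd h' ht1
            · exact absurd h' hty
          · exfalso
            exact htn (Or.inl ((pg_unique_invol htzy (c1 y hy2) ht2 hv2 ht1 hv1) ▸ mem_zpowers v))
      -- x' := v * x is a distinct open twin of x
      set x' := v * x with hx'
      have hx'2 : x' ^ 2 = 1 := by
        rw [hx', mul_pow, hv2, hx2, one_mul]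
      have hx'1 : x' ≠ 1 := by
        intro hc
        have : x = v⁻¹ := eq_inv_of_mul_eq_one_left (by rw [mul_comm]; exact hc)
        exact hncmp (Or.inl (this ▸ inv_mem (mem_zpowers v)))
      have hx'x : x' ≠ x := by
        intro hc
        apply hv1
        calc v = v * x * x⁻¹ := (mul_inv_cancel_right v x).symm
        _ = x * x⁻¹ := by rw [← hx', hc]
        _ = 1 := mul_inv_cancel x
      have hncmp' : ¬ (x' ∈ zpowers v ∨ v ∈ zpowers x') := by
        rintro (hc | hc)
        · refine hncmp (Or.inl ?_)
          have : x = v⁻¹ * x' := by rw [hx', inv_mul_cancel_left]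
          rw [this]
          exact mul_mem (inv_mem (mem_zpowers v)) hc
        · rcases mem_zpowers_of_sq hx'2 hc with h' | h'
          · exact hv1 h'
          · apply hx1
            have := mul_left_cancel (a := v) (b := x) (c := 1) (by rw [mul_one, ← hx', ← h'])
            exact this
      have htwins : AreTwins (powerGraph G) x x' := by
        refine Or.inl (Set.ext fun y => ?_)
        simp only [mem_neighborSet]
        constructor
        · intro hadj
          rw [c2 x hx2 hx1 hncmp y hadj]
          exact pg_adj_one hx'1
        · intro hadj
          rw [c2 x' hx'2 hx'1 hncmp' y hadj]
          exact pg_adj_one hx1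
      refine h x hxu hxv ?_ x' hx'x htwins
      simp only [hux, true_iff]
      exact hnvx
    · -- B1 : v² ≠ 1, consider z := v * x
      set z := v * x with hz
      have hz1 : z ≠ 1 := by
        intro hc
        have : x = v⁻¹ := eq_inv_of_mul_eq_one_left (by rw [mul_comm]; exact hc)
        exact hncmp (Or.inl (this ▸ inv_mem (mem_zpowers v)))
      have hzv : z ≠ v := by
        intro hc
        apply hx1
        have := mul_left_cancel (a := v) (b := x) (c := 1) (by rw [mul_one, ← hz, hc])
        exact this
      have hadjuz : (powerGraph G).Adj 1 z := (pg_adj_one hz1).symm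
      have hnadjvz : ¬ (powerGraph G).Adj v z := by
        intro hadj
        rcases (pg_adj.mp hadj).2 with hzzv | hvzz
        · refine hncmp (Or.inl ?_)
          have : x = v⁻¹ * z := by rw [hz, inv_mul_cancel_left]
          rw [this]
          exact mul_mem (inv_mem (mem_zpowers v)) hzzv
        · -- v ∈ zpowers z; then x ∈ zpowers z and the involution of ⟨v⟩ is in ⟨z⟩
          have hxzz : x ∈ zpowers z := by
            have : x = v⁻¹ * z := by rw [hz, inv_mul_cancel_left]
            rw [this]
            exact mul_mem (inv_mem hvzz) (mem_zpowers z)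
          have hv1 : v ≠ 1 := fun hc => hv2 (by rw [hc, one_pow])
          obtain ⟨y, hyzv, hy2, hy1⟩ := exists_invol_in_zpowers hcard2 hv1
          have hyzz : y ∈ zpowers z := (zpowers_le.mpr hvzz) hyzv
          have hxy : x = y := pg_unique_invol hxzz hyzz hx2 hy2 hx1 hy1
          exact hncmp (Or.inl (hxy ▸ hyzv))
      have hzdiff : ¬ ((powerGraph G).Adj 1 z ↔ (powerGraph G).Adj v z) := by
        simp only [hadjuz, true_iff]
        exact hnadjvz
      have := hord z hz1 hzv hzdiff
      apply hv2
      rw [← this, hz, mul_pow, hx2, mul_one]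

end Key2

section Key3
variable {G : Type*} [CommGroup G] [Fintype G]

lemma key_comp2 {m : ℕ} (hcard2 : Fintype.card G = 2 ^ m) {u v x : G}
    (huv : u ≠ v) (huzv : u ∈ zpowers v)
    (hxu : x ≠ u) (hxv : x ≠ v)
    (hx2 : x ^ 2 = 1)
    (hnux : ¬ (powerGraph G).Adj u x) (hvx : (powerGraph G).Adj v x) : False := by
  rcases (pg_adj.mp hvx).2 with hxzv | hvzx
  · have hx1 : x ≠ 1 := by
      rintro rfl
      by_cases hu1 : u = 1
      · exact hxu hu1.symm
      · exact hnux (pg_adj_one hu1)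
    have hu1 : u ≠ 1 := by
      rintro rfl
      exact hnux ((pg_adj_one hx1).symm)
    obtain ⟨y, hyzu, hy2, hy1⟩ := exists_invol_in_zpowers hcard2 hu1
    have hxy : x = y := pg_unique_invol hxzv ((zpowers_le.mpr huzv) hyzu) hx2 hy2 hx1 hy1
    exact hnux (pg_adj.mpr ⟨Ne.symm hxu, Or.inl (hxy ▸ hyzu)⟩)
  · rcases mem_zpowers_of_sq hx2 hvzx with h' | h'
    · subst h'
      apply huv
      simpa [Subgroup.zpowers_one_eq_bot, Subgroup.mem_bot] using huzv
    · exact hxv h'.symm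

lemma pg_key {p m : ℕ} (hp : p.Prime) (hcard : Fintype.card G = p ^ m) {u v : G} (huv : u ≠ v)
    (hnt : ¬ AreTwins (powerGraph G) u v) :
    ∃ w, w ≠ u ∧ w ≠ v ∧ ¬ ((powerGraph G).Adj u w ↔ (powerGraph G).Adj v w) ∧
      ∃ w', w' ≠ w ∧ AreTwins (powerGraph G) w w' := by
  by_contra hc
  have h : ∀ w, w ≠ u → w ≠ v → ¬ ((powerGraph G).Adj u w ↔ (powerGraph G).Adj v w) →
      ∀ w', w' ≠ w → ¬ AreTwins (powerGraph G) w w' :=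
    fun w h1 h2 h3 w' h4 h5 => hc ⟨w, h1, h2, h3, w', h4, h5⟩
  by_cases hcmp : u ∈ zpowers v ∨ v ∈ zpowers u
  · have hord := pg_hord h
    obtain ⟨x, hxu, hxv, hdiff⟩ := exists_adj_diff_of_not_twins huv hnt
    have hx2 : x ^ 2 = 1 := hord x hxu hxv hdiff
    have hx1 : x ≠ 1 := by
      rintro rfl
      by_cases hu1 : u = 1
      · exact hxu hu1.symm
      by_cases hv1 : v = 1
      · exact hxv hv1.symm
      exact hdiff ⟨fun _ => pg_adj_one hv1, fun _ => pg_adj_one hu1⟩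
    have hcard2 : Fintype.card G = 2 ^ m := by
      rw [← p_eq_two hp hcard hx2 hx1]; exact hcard
    have hord' : ∀ w, w ≠ v → w ≠ u →
        ¬ ((powerGraph G).Adj v w ↔ (powerGraph G).Adj u w) → w ^ 2 = 1 :=
      fun w h2 h1 h3 => hord w h1 h2 (fun hiff => h3 hiff.symm)
    have h' : ∀ w, w ≠ v → w ≠ u → ¬ ((powerGraph G).Adj v w ↔ (powerGraph G).Adj u w) →
        ∀ w', w' ≠ w → ¬ AreTwins (powerGraph G) w w' :=
      fun w h2 h1 h3 => h w h1 h2 (fun hiff => h3 hiff.symm)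
    have hcases : ((powerGraph G).Adj u x ∧ ¬ (powerGraph G).Adj v x) ∨
        (¬ (powerGraph G).Adj u x ∧ (powerGraph G).Adj v x) := by tauto
    rcases hcmp with huzv | hvzu
    · rcases hcases with ⟨h1, h2⟩ | ⟨h1, h2⟩
      · exact key_comp hcard2 huv huzv hxu hxv hx2 h1 h2 hord h
      · exact key_comp2 hcard2 huv huzv hxu hxv hx2 h1 h2
    · rcases hcases with ⟨h1, h2⟩ | ⟨h1, h2⟩
      · exact key_comp2 hcard2 (Ne.symm huv) hvzu hxv hxu hx2 h2 h1
      · exact key_comp hcard2 (Ne.symm huv) hvzu hxv hxu hx2 h2 h1 hord' h'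
  · exact key_incomp huv hcmp hnt h

end Key3

section Resolving
variable {G : Type*} [CommGroup G] [Fintype G] {p m : ℕ}

lemma pg_resolving_iff (hp : p.Prime) (hcard : Fintype.card G = p ^ m) (W : Set G) :
    IsResolvingSet (powerGraph G) W ↔
      ∀ t t' : G, t ∉ W → t' ∉ W → AreTwins (powerGraph G) t t' → t = t' := by
  constructor
  · intro hres t t' ht ht' htw
    by_contra htt
    obtain ⟨w, hwW, hwd⟩ := hres t t' htt
    rcases (pg_resolver htt).mp hwd with rfl | rfl | hdiff
    · exact ht hwW
    · exact ht' hwW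
    · have hwt : w ≠ t := fun hc => ht (hc ▸ hwW)
      have hwt' : w ≠ t' := fun hc => ht' (hc ▸ hwW)
      exact hdiff (twins_adj_iff htw hwt hwt')
  · intro hW u v huv
    by_cases htw : AreTwins (powerGraph G) u v
    · have hmem : u ∈ W ∨ v ∈ W := by
        by_contra hcon
        push_neg at hcon
        exact huv (hW u v hcon.1 hcon.2 htw)
      rcases hmem with hm | hm
      · exact ⟨u, hm, (pg_resolver huv).mpr (Or.inl rfl)⟩
      · exact ⟨v, hm, (pg_resolver huv).mpr (Or.inr (Or.inl rfl))⟩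
    · obtain ⟨w, hwu, hwv, hdiff, w', hw'w, htww'⟩ := pg_key hp hcard huv htw
      by_cases hwW : w ∈ W
      · exact ⟨w, hwW, (pg_resolver huv).mpr (Or.inr (Or.inr hdiff))⟩
      · have hw'W : w' ∈ W := by
          by_contra hcon
          exact hw'w (hW w' w hcon hwW (twins_symm htww'))
        by_cases hw'u : w' = u
        · exact ⟨w', hw'W, (pg_resolver huv).mpr (Or.inl hw'u)⟩
        by_cases hw'v : w' = v
        · exact ⟨w', hw'W, (pg_resolver huv).mpr (Or.inr (Or.inl hw'v))⟩
        refine ⟨w', hw'W, (pg_resolver huv).mpr (Or.inr (Or.inr ?_))⟩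
        intro hiff
        apply hdiff
        have e1 := twins_adj_iff htww' (fun hc => hwu hc.symm) (fun hc => hw'u hc.symm)
        have e2 := twins_adj_iff htww' (fun hc => hwv hc.symm) (fun hc => hw'v hc.symm)
        constructor
        · intro ha
          exact (e2.mpr ((hiff.mp (e1.mp ha.symm).symm).symm)).symm
        · intro ha
          exact (e1.mpr ((hiff.mpr (e2.mp ha.symm).symm).symm)).symm

lemma pg_minimal_iff (hp : p.Prime) (hcard : Fintype.card G = p ^ m) (W : Set G) :
    IsMinimalResolvingSet (powerGraph G) W ↔
      ((∀ t t' : G, t ∉ W → t' ∉ W → AreTwins (powerGraph G) t t' → t = t') ∧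
        ∀ u ∈ W, ∃ t, t ∉ W ∧ t ≠ u ∧ AreTwins (powerGraph G) u t) := by
  constructor
  · rintro ⟨hres, hmin⟩
    have hR := (pg_resolving_iff hp hcard W).mp hres
    refine ⟨hR, ?_⟩
    intro u huW
    have hss : W \ {u} ⊂ W := Set.sdiff_singleton_ssubset.mpr huW
    have hnres := hmin _ hss
    rw [pg_resolving_iff hp hcard] at hnres
    push_neg at hnres
    obtain ⟨t, t', ht, ht', htw, htt⟩ := hnres
    have hmem : ∀ s : G, s ∉ W \ {u} → s ∉ W ∨ s = u := by
      intro s hs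
      by_cases h1 : s ∈ W
      · right
        by_contra h2
        exact hs ⟨h1, h2⟩
      · exact Or.inl h1
    rcases hmem t ht with h1 | rfl
    · rcases hmem t' ht' with h2 | rfl
      · exact absurd (hR t t' h1 h2 htw) htt
      · exact ⟨t, h1, htt, twins_symm htw⟩
    · rcases hmem t' ht' with h2 | h2
      · exact ⟨t', h2, fun hc => htt hc.symm, htw⟩
      · exact absurd h2.symm htt
  · rintro ⟨hR, hT⟩
    refine ⟨(pg_resolving_iff hp hcard W).mpr hR, ?_⟩
    intro W' hss hres'
    obtain ⟨u, huW, huW'⟩ := Set.exists_of_ssubset hss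
    obtain ⟨t, htW, htu, htw⟩ := hT u huW
    exact htu ((pg_resolving_iff hp hcard W').mp hres' t u
      (fun hc => htW (hss.1 hc)) huW' (twins_symm htw))

end Resolving


/-- The power graph of a finite abelian group of prime power order
has the exchange property. -/
theorem exchange_powerGraph_abelian_primePower
    (G : Type*) [CommGroup G] [Fintype G]
    (p m : ℕ) (hp : p.Prime) (hm : 1 ≤ m) (hcard : Fintype.card G = p ^ m) :
    HasExchangeProperty (powerGraph G) := by
  intro W₁ W₂ h₁ h₂ u huW₁
  rw [pg_minimal_iff hp hcard] at h₁ h₂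
  obtain ⟨hR₁, hT₁⟩ := h₁
  obtain ⟨hR₂, hT₂⟩ := h₂
  obtain ⟨t, htW₁, htu, htw⟩ := hT₁ u huW₁
  have hv : u ∈ W₂ ∨ t ∈ W₂ := by
    by_contra hcon
    push_neg at hcon
    exact htu (hR₂ u t hcon.1 hcon.2 htw).symm
  rcases hv with hv | hv
  · refine ⟨u, hv, ?_⟩
    have heq : (W₁ \ {u}) ∪ {u} = W₁ := by
      rw [Set.diff_union_self]
      exact Set.union_eq_self_of_subset_right (by simpa using huW₁)
    rw [heq]
    exact (pg_minimal_iff hp hcard W₁).mpr ⟨hR₁, hT₁⟩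
  · refine ⟨t, hv, (pg_minimal_iff hp hcard _).mpr ⟨?_, ?_⟩⟩
    · -- no two distinct twins outside (W₁ \ {u}) ∪ {t}
      intro a b ha hb htwab
      simp only [Set.mem_union, Set.mem_diff, Set.mem_singleton_iff, not_or, not_and,
        not_not] at ha hb
      obtain ⟨ha1, ha2⟩ := ha
      obtain ⟨hb1, hb2⟩ := hb
      by_cases haW : a ∈ W₁
      · have hau : a = u := ha1 haW
        by_cases hbW : b ∈ W₁
        · rw [hau, hb1 hbW]
        · -- a = u, b ∉ W₁, b ≠ t ; twins u b and twins u t give twins b t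
          subst hau
          have : AreTwins (powerGraph G) b t := twins_trans (twins_symm htwab) htw
          exact absurd (hR₁ b t hbW htW₁ this) hb2
      · by_cases hbW : b ∈ W₁
        · have hbu : b = u := hb1 hbW
          subst hbu
          have : AreTwins (powerGraph G) a t := twins_trans htwab htw
          exact absurd (hR₁ a t haW htW₁ this) ha2
        · exact hR₁ a b haW hbW htwab
    · -- every element of (W₁ \ {u}) ∪ {t} has an outside twin
      intro a haW'
      rcases haW' with haW₁ | hat
      · obtain ⟨haW, hau⟩ := haW₁
        simp only [Set.mem_singleton_iff] at hau
        obtain ⟨s, hsW₁, hsa, hsw⟩ := hT₁ a haW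
        by_cases hst : s = t
        · refine ⟨u, ?_, fun hc => hau hc.symm, twins_trans (hst ▸ hsw) (twins_symm htw)⟩
          simp only [Set.mem_union, Set.mem_diff, Set.mem_singleton_iff, not_or, not_and,
            not_not]
          exact ⟨fun _ => trivial, htu.symm⟩
        · refine ⟨s, ?_, hsa, hsw⟩
          simp only [Set.mem_union, Set.mem_diff, Set.mem_singleton_iff, not_or, not_and,
            not_not]
          exact ⟨fun hc => absurd hc hsW₁, hst⟩
      · simp only [Set.mem_singleton_iff] at hat
        subst hat
        refine ⟨u, ?_, fun hc => htu hc.symm, twins_symm htw⟩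
        simp only [Set.mem_union, Set.mem_diff, Set.mem_singleton_iff, not_or, not_and,
          not_not]
        exact ⟨fun _ => trivial, htu.symm⟩
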